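/- Fix n ≥ 1 and set b = ⌊log₂ n⌋ + 2. In ℤ[X₀, …, X_{b−1}], let I be the ideal generated by Xᵢ² − (2·Xᵢ + X_{i+1}) for 0 ≤ i ≤ b−2 together with X_{b−1}². If g is a multilinear polynomial with (2 + X₀)ⁿ − g ∈ I, then evaluating g at X₀ = X₁ = ⋯ = X_{b−1} = 1 gives ∑_{k=0}^{n} C(n,k)·C(2k,k), the first binomial transform of the central binomial coefficients (OEIS A026375). -/

import Mathlib

open MvPolynomial

/-- The generators of the ideal `I`: `Xᵢ² − (2Xᵢ + X_{i+1})` for `i ≤ b-2`, and `X_{b-1}²`. -/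
noncomputable def gens (b : ℕ) : Fin b → MvPolynomial (Fin b) ℤ := fun i =>
  if h : (i : ℕ) + 1 < b then X i ^ 2 - (2 * X i + X ⟨(i : ℕ) + 1, h⟩) else X i ^ 2

noncomputable def qpoly (m : ℕ) : Polynomial ℤ := Polynomial.X ^ (2*m) + (Polynomial.X ^ m + 1)
noncomputable def rpoly (m : ℕ) : Polynomial ℤ := (qpoly m) ^ 2

lemma aux_deg_lt (m : ℕ) (hm : 1 ≤ m) : ((Polynomial.X : Polynomial ℤ) ^ m + 1).degree < ((2*m : ℕ) : WithBot ℕ) := by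
  apply lt_of_le_of_lt (Polynomial.degree_add_le _ _)
  simp only [Polynomial.degree_X_pow, Polynomial.degree_one]
  apply max_lt
  · exact_mod_cast (show m < 2*m by omega)
  · exact lt_of_le_of_lt (show (0 : WithBot ℕ) ≤ ((0:ℕ) : WithBot ℕ) by norm_num)
      (by exact_mod_cast (show 0 < 2*m by omega))

lemma qpoly_monic (m : ℕ) (hm : 1 ≤ m) : (qpoly m).Monic :=
  Polynomial.monic_X_pow_add (aux_deg_lt m hm)

lemma qpoly_degree (m : ℕ) (hm : 1 ≤ m) : (qpoly m).degree = ((2*m : ℕ) : WithBot ℕ) := by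
  unfold qpoly
  rw [Polynomial.degree_add_eq_left_of_degree_lt, Polynomial.degree_X_pow]
  rw [Polynomial.degree_X_pow]
  exact aux_deg_lt m hm

lemma rpoly_monic (m : ℕ) (hm : 1 ≤ m) : (rpoly m).Monic := (qpoly_monic m hm).pow 2

lemma rpoly_degree (m : ℕ) (hm : 1 ≤ m) : (rpoly m).degree = ((4*m : ℕ) : WithBot ℕ) := by
  unfold rpoly
  rw [Polynomial.degree_pow, qpoly_degree m hm, two_smul, ← Nat.cast_add]
  norm_num
  ring

noncomputable def tB (m : ℕ) : AdjoinRoot (rpoly m) := AdjoinRoot.root _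
noncomputable def vB (m : ℕ) : AdjoinRoot (rpoly m) :=
  -(2*(tB m)^(m-1) + 3*(tB m)^(2*m-1) + 2*(tB m)^(3*m-1) + (tB m)^(4*m-1))

lemma hs_zero (m : ℕ) : ((tB m)^(2*m) + ((tB m)^m + 1))^2 = 0 := by
  have h2 : (AdjoinRoot.mk (rpoly m)) (((Polynomial.X : Polynomial ℤ)^(2*m) + ((Polynomial.X : Polynomial ℤ)^m+1))^2) = 0 :=
    AdjoinRoot.mk_self
  simp only [map_pow, map_add, map_one, AdjoinRoot.mk_X] at h2
  unfold tB
  exact h2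

lemma tv (m : ℕ) (hm : 1 ≤ m) : tB m * vB m = 1 := by
  obtain ⟨M, rfl⟩ : ∃ M, m = M + 1 := ⟨m - 1, by omega⟩
  have hs := hs_zero (M+1)
  unfold vB
  set t := tB (M+1)
  have e1 : (M+1) - 1 = M := by omega
  have e2 : 2*(M+1) - 1 = 2*M+1 := by omega
  have e3 : 3*(M+1) - 1 = 3*M+2 := by omega
  have e4 : 4*(M+1) - 1 = 4*M+3 := by omega
  have e5 : 2*(M+1) = 2*M+2 := by omega
  rw [e1, e2, e3, e4]
  rw [e5] at hs
  linear_combination -hs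

lemma tvpow (m : ℕ) (hm : 1 ≤ m) (k : ℕ) : (tB m)^k * (vB m)^k = 1 := by
  rw [← mul_pow, tv m hm, one_pow]

noncomputable def LF (m : ℕ) (hm : 1 ≤ m) : AdjoinRoot (rpoly m) →ₗ[ℤ] ℤ :=
  (Polynomial.lcoeff ℤ (2*m-1)).comp
    ((AdjoinRoot.modByMonicHom (rpoly_monic m hm)).comp
      (LinearMap.mulLeft ℤ ((tB m)^(2*m-1))))

lemma LF_window (m : ℕ) (hm : 1 ≤ m) (c : ℕ) (p : Polynomial ℤ)
    (hc : c ≤ 2*m-1) (hp : p.natDegree + (2*m-1-c) < 4*m) :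
    LF m hm ((vB m)^c * AdjoinRoot.mk (rpoly m) p) = p.coeff c := by
  have key : (tB m)^(2*m-1) * ((vB m)^c * AdjoinRoot.mk (rpoly m) p)
      = AdjoinRoot.mk (rpoly m) ((Polynomial.X : Polynomial ℤ)^(2*m-1-c) * p) := by
    have hsplit : (tB m)^(2*m-1) = (tB m)^(2*m-1-c) * (tB m)^c := by
      rw [← pow_add]; congr 1; omega
    rw [hsplit]
    have h1 : (tB m)^c * (vB m)^c = 1 := tvpow m hm c
    have h2 : AdjoinRoot.mk (rpoly m) ((Polynomial.X : Polynomial ℤ)^(2*m-1-c) * p)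
        = (tB m)^(2*m-1-c) * AdjoinRoot.mk (rpoly m) p := by
      rw [map_mul, map_pow, AdjoinRoot.mk_X]; rfl
    rw [h2]
    linear_combination ((tB m)^(2*m-1-c) * AdjoinRoot.mk (rpoly m) p) * h1
  simp only [LF, LinearMap.coe_comp, Function.comp_apply, LinearMap.mulLeft_apply,
    Polynomial.lcoeff_apply]
  rw [key, AdjoinRoot.modByMonicHom_mk]
  have hmod : ((Polynomial.X : Polynomial ℤ)^(2*m-1-c) * p) %ₘ rpoly m = (Polynomial.X : Polynomial ℤ)^(2*m-1-c) * p := by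
    rw [Polynomial.modByMonic_eq_self_iff (rpoly_monic m hm), rpoly_degree m hm]
    calc ((Polynomial.X : Polynomial ℤ)^(2*m-1-c) * p).degree ≤ (((Polynomial.X : Polynomial ℤ)^(2*m-1-c) * p).natDegree : WithBot ℕ) :=
          Polynomial.degree_le_natDegree
      _ < ((4*m : ℕ) : WithBot ℕ) := by
          have : ((Polynomial.X : Polynomial ℤ)^(2*m-1-c) * p).natDegree < 4*m := by
            apply lt_of_le_of_lt (Polynomial.natDegree_mul_le)
            rw [Polynomial.natDegree_X_pow]
            omega
          exact_mod_cast this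
  rw [hmod]
  have hc2 := Polynomial.coeff_X_pow_mul p (2*m-1-c) c
  rw [show c + (2*m-1-c) = 2*m-1 by omega] at hc2
  rw [hc2]

lemma factor_unit (m : ℕ) (hm : 1 ≤ m) (a : ℕ) :
    1 + (tB m)^a + (vB m)^a
      = (vB m)^a * AdjoinRoot.mk (rpoly m) ((Polynomial.X : Polynomial ℤ)^(2*a) + ((Polynomial.X : Polynomial ℤ)^a + 1)) := by
  have h : (tB m)^a * (vB m)^a = 1 := tvpow m hm a
  have hmk : AdjoinRoot.mk (rpoly m) ((Polynomial.X : Polynomial ℤ)^(2*a) + ((Polynomial.X : Polynomial ℤ)^a+1))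
      = (tB m)^(2*a) + ((tB m)^a + 1) := by
    simp [map_add, map_pow, map_one, AdjoinRoot.mk_X, tB]
  rw [hmk]
  linear_combination (-(1 : AdjoinRoot (rpoly m)) - (tB m)^a) * h

lemma sq_top (m : ℕ) (hm : 1 ≤ m) : (1 + (tB m)^m + (vB m)^m)^2 = 0 := by
  rw [factor_unit m hm m, mul_pow, ← map_pow]
  rw [show ((Polynomial.X : Polynomial ℤ)^(2*m) + ((Polynomial.X : Polynomial ℤ)^m + 1))^2 = rpoly m from rfl]
  rw [AdjoinRoot.mk_self, mul_zero]

lemma factor_three (m : ℕ) (hm : 1 ≤ m) :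
    2 + (1 + tB m + vB m)
      = vB m * AdjoinRoot.mk (rpoly m) ((Polynomial.X : Polynomial ℤ)^2 + 3*Polynomial.X + 1) := by
  have h : tB m * vB m = 1 := tv m hm
  have hmk : AdjoinRoot.mk (rpoly m) ((Polynomial.X : Polynomial ℤ)^2 + 3*Polynomial.X + 1)
      = (tB m)^2 + 3*(tB m) + 1 := by
    simp [map_add, map_pow, map_mul, map_one, map_ofNat, AdjoinRoot.mk_X, tB]
  rw [hmk]
  linear_combination (-(3 : AdjoinRoot (rpoly m)) - tB m) * h

lemma sum_two_pow (b : ℕ) : ∑ i ∈ Finset.range b, 2^i = 2^b - 1 := by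
  induction b with
  | zero => simp
  | succ b ih =>
    rw [Finset.sum_range_succ, ih, pow_succ]
    have : 1 ≤ 2^b := Nat.one_le_two_pow
    omega

lemma coeff_prod (S : Finset ℕ) :
    ((∏ i ∈ S, ((Polynomial.X : Polynomial ℤ)^(2*2^i) + ((Polynomial.X : Polynomial ℤ)^(2^i) + 1))).coeff
      (∑ i ∈ S, 2^i) = 1)
    ∧ (∏ i ∈ S, ((Polynomial.X : Polynomial ℤ)^(2*2^i) + ((Polynomial.X : Polynomial ℤ)^(2^i) + 1))).natDegree
      ≤ 2 * ∑ i ∈ S, 2^i := by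
  induction S using Finset.induction_on_max with
  | empty => simp
  | insert a s ha ih =>
    obtain ⟨ih1, ih2⟩ := ih
    have hnotmem : a ∉ s := fun h => lt_irrefl a (ha a h)
    rw [Finset.prod_insert hnotmem, Finset.sum_insert hnotmem]
    set P := ∏ i ∈ s, ((Polynomial.X : Polynomial ℤ)^(2*2^i) + ((Polynomial.X : Polynomial ℤ)^(2^i) + 1)) with hP
    set A := ∑ i ∈ s, 2^i with hA
    set c := 2^a with hc
    have hAc : A < c := by
      have hsub : s ⊆ Finset.range a := fun x hx => Finset.mem_range.mpr (ha x hx)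
      have h2 : A ≤ 2^a - 1 := by
        have h2' := Finset.sum_le_sum_of_subset (f := fun i => 2^i) hsub
        rw [sum_two_pow] at h2'
        simpa [hA] using h2'
      have h1 : 1 ≤ 2^a := Nat.one_le_two_pow
      simp only [hc]
      omega
    constructor
    · rw [add_mul, add_mul, one_mul]
      rw [Polynomial.coeff_add, Polynomial.coeff_add]
      rw [mul_comm ((Polynomial.X : Polynomial ℤ)^(2*c)) P, mul_comm ((Polynomial.X : Polynomial ℤ)^c) P]
      rw [Polynomial.coeff_mul_X_pow', Polynomial.coeff_mul_X_pow']
      rw [if_neg (by omega), if_pos (by omega)]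
      rw [show c + A - c = A by omega, ih1]
      rw [Polynomial.coeff_eq_zero_of_natDegree_lt (by omega)]
      ring
    · apply le_trans (Polynomial.natDegree_mul_le)
      have h1 : ((Polynomial.X : Polynomial ℤ)^(2*c) + ((Polynomial.X : Polynomial ℤ)^c + 1)).natDegree ≤ 2*c := by
        apply le_trans (Polynomial.natDegree_add_le _ _)
        apply max_le
        · simp
        · apply le_trans (Polynomial.natDegree_add_le _ _)
          simp
          omega
      omega

lemma coeff_central (n : ℕ) :
    (((Polynomial.X : Polynomial ℤ)^2 + 3*Polynomial.X + 1)^n).coeff n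
      = ∑ k ∈ Finset.range (n + 1), (n.choose k : ℤ) * ((2 * k).choose k : ℤ) := by
  have hrw : ((Polynomial.X : Polynomial ℤ)^2 + 3*Polynomial.X + 1) = (1+Polynomial.X)^2 + Polynomial.X := by ring
  rw [hrw, add_pow]
  rw [Polynomial.finset_sum_coeff]
  apply Finset.sum_congr rfl
  intro k hk
  have hk' : k ≤ n := Nat.lt_succ_iff.mp (Finset.mem_range.mp hk)
  rw [← pow_mul]
  have : ((1+Polynomial.X : Polynomial ℤ)^(2*k) * Polynomial.X^(n-k) * (n.choose k : Polynomial ℤ)).coeff n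
      = (n.choose k : ℤ) * ((1+Polynomial.X : Polynomial ℤ)^(2*k) * Polynomial.X^(n-k)).coeff n := by
    rw [mul_comm _ ((n.choose k : Polynomial ℤ))]
    rw [← Polynomial.C_eq_natCast, Polynomial.coeff_C_mul]
  rw [this, Polynomial.coeff_mul_X_pow', if_pos (by omega)]
  rw [show n - (n-k) = k by omega]
  rw [Polynomial.coeff_one_add_X_pow]

theorem stmt8 (n : ℕ) (hn : 1 ≤ n) (b : ℕ) (hb : b = Nat.log 2 n + 2)
    (g : MvPolynomial (Fin b) ℤ)
    (hml : ∀ m ∈ g.support, ∀ i : Fin b, m i ≤ 1)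
    (hg : (2 + X (⟨0, by omega⟩ : Fin b)) ^ n - g ∈ Ideal.span (Set.range (gens b))) :
    eval (fun _ : Fin b => (1 : ℤ)) g
      = ∑ k ∈ Finset.range (n + 1), (n.choose k : ℤ) * ((2 * k).choose k : ℤ) := by
  have hb2 : 2 ≤ b := by omega
  set m : ℕ := 2^(b-1) with hmdef
  have hm : 1 ≤ m := Nat.one_le_two_pow
  have hnm : n < m := by
    have h := Nat.lt_pow_succ_log_self (by norm_num : 1 < 2) n
    have he : b - 1 = Nat.log 2 n + 1 := by omega
    rw [hmdef, he]
    exact h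
  have h2m : 2 * m = 2^b := by
    rw [hmdef, ← pow_succ']
    congr 1
    omega
  -- the evaluation homomorphism
  set f : Fin b → AdjoinRoot (rpoly m) :=
    (fun i : Fin b => 1 + (tB m)^(2^(i:ℕ)) + (vB m)^(2^(i:ℕ))) with hf
  set ψ : MvPolynomial (Fin b) ℤ →ₐ[ℤ] AdjoinRoot (rpoly m) := MvPolynomial.aeval f with hψ
  -- ψ kills the generators
  have hgen : ∀ i : Fin b, ψ (gens b i) = 0 := by
    intro i
    unfold gens
    split_ifs with h
    · simp only [hψ, map_sub, map_add, map_mul, map_pow, MvPolynomial.aeval_X, map_ofNat, hf]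
      have e : (2:ℕ)^((i:ℕ)+1) = 2^(i:ℕ) * 2 := pow_succ 2 (i:ℕ)
      rw [e, pow_mul (tB m), pow_mul (vB m)]
      have hTV : (tB m)^(2^(i:ℕ)) * (vB m)^(2^(i:ℕ)) = 1 := tvpow m hm _
      linear_combination (2 : AdjoinRoot (rpoly m)) * hTV
    · simp only [hψ, map_pow, MvPolynomial.aeval_X, hf]
      have hieq : (i:ℕ) = b - 1 := by
        have := i.isLt
        omega
      rw [hieq, ← hmdef]
      exact sq_top m hm
  -- ψ g = ψ ((2+X₀)^n)
  have hker : ψ ((2 + X (⟨0, by omega⟩ : Fin b)) ^ n - g) = 0 := by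
    have hle : Ideal.span (Set.range (gens b)) ≤ RingHom.ker (ψ : MvPolynomial (Fin b) ℤ →+* AdjoinRoot (rpoly m)) := by
      rw [Ideal.span_le]
      rintro _ ⟨i, rfl⟩
      exact hgen i
    exact hle hg
  have hψeq : ψ g = ψ ((2 + X (⟨0, by omega⟩ : Fin b)) ^ n) := by
    rw [map_sub] at hker
    exact (sub_eq_zero.mp hker).symm
  -- LF value on monomials
  have hmono : ∀ d : Fin b →₀ ℕ, d ∈ g.support →
      LF m hm (ψ (MvPolynomial.monomial d (MvPolynomial.coeff d g))) = MvPolynomial.coeff d g := by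
    intro d hd
    rw [hψ, MvPolynomial.aeval_monomial]
    have hprod : (d.prod fun i k => f i ^ k) = ∏ i ∈ d.support, f i := by
      apply Finset.prod_congr rfl
      intro i hi
      have h1 : d i ≤ 1 := hml d hd i
      have h2 : d i ≠ 0 := Finsupp.mem_support_iff.mp hi
      have : d i = 1 := by omega
      simp only [this, pow_one]
    rw [hprod]
    -- factor the product
    have hfac : ∏ i ∈ d.support, f i
        = (vB m)^(∑ i ∈ d.support, 2^(i:ℕ))
          * AdjoinRoot.mk (rpoly m)
            (∏ i ∈ d.support, ((Polynomial.X : Polynomial ℤ)^(2*2^(i:ℕ)) + ((Polynomial.X : Polynomial ℤ)^(2^(i:ℕ)) + 1))) := by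
      rw [map_prod, ← Finset.prod_pow_eq_pow_sum, ← Finset.prod_mul_distrib]
      apply Finset.prod_congr rfl
      intro i _
      exact factor_unit m hm (2^(i:ℕ))
    rw [hfac]
    -- transfer to Finset ℕ
    set T : Finset ℕ := d.support.image Fin.val with hT
    have hsumT : ∑ i ∈ d.support, 2^(i:ℕ) = ∑ j ∈ T, 2^j := by
      rw [hT, Finset.sum_image (fun x _ y _ hxy => Fin.val_injective hxy)]
    have hprodT : (∏ i ∈ d.support, ((Polynomial.X : Polynomial ℤ)^(2*2^(i:ℕ)) + ((Polynomial.X : Polynomial ℤ)^(2^(i:ℕ)) + 1)))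
        = ∏ j ∈ T, ((Polynomial.X : Polynomial ℤ)^(2*2^j) + ((Polynomial.X : Polynomial ℤ)^(2^j) + 1)) := by
      rw [hT, Finset.prod_image (fun x _ y _ hxy => Fin.val_injective hxy)]
    rw [hsumT, hprodT]
    obtain ⟨hcp, hnd⟩ := coeff_prod T
    have hTsub : T ⊆ Finset.range b := by
      intro j hj
      rw [hT] at hj
      obtain ⟨i, _, rfl⟩ := Finset.mem_image.mp hj
      exact Finset.mem_range.mpr i.isLt
    have hAle : ∑ j ∈ T, 2^j ≤ 2*m - 1 := by
      have h2' := Finset.sum_le_sum_of_subset (f := fun j => 2^j) hTsub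
      rw [sum_two_pow] at h2'
      have h2'' : ∑ j ∈ T, 2^j ≤ 2^b - 1 := h2'
      have hpos : 1 ≤ 2^b := Nat.one_le_two_pow
      omega
    -- scalar out
    have hsm : (algebraMap ℤ (AdjoinRoot (rpoly m))) (MvPolynomial.coeff d g)
        * ((vB m)^(∑ j ∈ T, 2^j) * AdjoinRoot.mk (rpoly m) (∏ j ∈ T, ((Polynomial.X : Polynomial ℤ)^(2*2^j) + ((Polynomial.X : Polynomial ℤ)^(2^j) + 1))))
        = (MvPolynomial.coeff d g) • ((vB m)^(∑ j ∈ T, 2^j) * AdjoinRoot.mk (rpoly m) (∏ j ∈ T, ((Polynomial.X : Polynomial ℤ)^(2*2^j) + ((Polynomial.X : Polynomial ℤ)^(2^j) + 1)))) := by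
      rw [Algebra.smul_def]
    rw [hsm, map_smul, smul_eq_mul]
    rw [LF_window m hm _ _ hAle (by omega), hcp, mul_one]
  -- eval at 1 equals LF ∘ ψ
  have heval : eval (fun _ : Fin b => (1 : ℤ)) g = LF m hm (ψ g) := by
    conv_lhs => rw [g.as_sum]
    conv_rhs => rw [g.as_sum]
    rw [map_sum, map_sum, map_sum]
    apply Finset.sum_congr rfl
    intro d hd
    rw [hmono d hd, MvPolynomial.eval_monomial]
    simp [Finsupp.prod]
  rw [heval, hψeq]
  -- compute LF ψ ((2+X₀)^n)
  have hpsi2 : ψ ((2 + X (⟨0, by omega⟩ : Fin b)) ^ n)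
      = (vB m)^n * AdjoinRoot.mk (rpoly m) (((Polynomial.X : Polynomial ℤ)^2 + 3*Polynomial.X + 1)^n) := by
    rw [map_pow, map_add, MvPolynomial.aeval_X]
    have hx0 : f (⟨0, by omega⟩ : Fin b) = 1 + tB m + vB m := by
      rw [hf]
      norm_num
    rw [hx0]
    have h2' : (ψ (2 : MvPolynomial (Fin b) ℤ)) = 2 := by
      simp [hψ]
    rw [h2', factor_three m hm, map_pow, mul_pow]
  rw [hpsi2]
  rw [LF_window m hm n _ (by omega) ?_]
  · exact coeff_central n
  · have hnd : (((Polynomial.X : Polynomial ℤ)^2 + 3*Polynomial.X + 1)^n).natDegree ≤ 2*n := by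
      have : ((Polynomial.X : Polynomial ℤ)^2 + 3*Polynomial.X + 1).natDegree ≤ 2 := by
        apply le_trans (Polynomial.natDegree_add_le _ _)
        apply max_le
        · apply le_trans (Polynomial.natDegree_add_le _ _)
          apply max_le
          · simp
          · apply le_trans (Polynomial.natDegree_mul_le)
            simp
        · simp
      exact le_trans (Polynomial.natDegree_pow_le) (by
        calc n * (((Polynomial.X : Polynomial ℤ)^2 + 3*Polynomial.X + 1)).natDegree
            ≤ n * 2 := Nat.mul_le_mul_left n this
          _ = 2*n := by ring)
    omega
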